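/- Let x ∈ [0,1]ⁿ with B = {j : 0 < xⱼ < 1}. If the principal submatrix Q_BB is positive semidefinite, then for every symmetric M with M ⪰ 0 and Mᵢⱼ = 0 whenever i ∉ B or j ∉ B, we have ⟨Q, M⟩ ≥ 0. Conversely, if Q_BB is not positive semidefinite, there exists such an M (with entries bounded appropriately to keep x xᵀ + M in 𝓕_RS) with ⟨Q, M⟩ < 0. -/

import Mathlib

open Matrix Finset

/-- Trace inner product ⟨A, B⟩ = trace(AᵀB). -/
noncomputable def ip {n : ℕ} (A B : Matrix (Fin n) (Fin n) ℝ) : ℝ :=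
  ∑ i, ∑ j, A i j * B i j

/-- The SDP-RLT feasible set. -/
def memFRS {n : ℕ} (x : Fin n → ℝ) (X : Matrix (Fin n) (Fin n) ℝ) : Prop :=
  X.IsSymm ∧ (∀ i, 0 ≤ x i ∧ x i ≤ 1) ∧
    (∀ i j, max (x i + x j - 1) 0 ≤ X i j ∧ X i j ≤ min (x i) (x j)) ∧
    (X - Matrix.vecMulVec x x).PosSemidef

private lemma aux_quad {n : ℕ} (t : ℝ) (y z : Fin n → ℝ) :
    z ⬝ᵥ ((t • Matrix.vecMulVec y y) *ᵥ z) = t * (y ⬝ᵥ z) ^ 2 := by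
  simp only [dotProduct, mulVec, Matrix.smul_apply, Matrix.vecMulVec_apply,
    smul_eq_mul, sq]
  simp_rw [Finset.mul_sum, Finset.sum_mul, Finset.mul_sum]
  refine Finset.sum_congr rfl fun i _ => Finset.sum_congr rfl fun j _ => by ring

private lemma aux_psd {n : ℕ} (t : ℝ) (ht : 0 ≤ t) (y : Fin n → ℝ) :
    (t • Matrix.vecMulVec y y).PosSemidef := by
  rw [Matrix.posSemidef_iff_dotProduct_mulVec]
  constructor
  · ext i j
    simp only [Matrix.conjTranspose_apply, Matrix.smul_apply,
      Matrix.vecMulVec_apply, star_trivial, smul_eq_mul]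
    ring
  · intro z
    have h := aux_quad t y z
    simp only [star_trivial]
    rw [h]
    positivity

theorem stmt_10 {n : ℕ} (Q : Matrix (Fin n) (Fin n) ℝ) (hQ : Q.IsSymm)
    (x : Fin n → ℝ) (hx : ∀ i, 0 ≤ x i ∧ x i ≤ 1)
    (B : Set (Fin n)) (hB : B = {j | 0 < x j ∧ x j < 1}) :
    -- if Q_BB is positive semidefinite, every admissible M has ⟨Q, M⟩ ≥ 0
    ((∀ y : Fin n → ℝ, (∀ i, i ∉ B → y i = 0) → 0 ≤ y ⬝ᵥ (Q *ᵥ y)) →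
      ∀ M : Matrix (Fin n) (Fin n) ℝ, M.PosSemidef →
        (∀ i j, i ∉ B ∨ j ∉ B → M i j = 0) → 0 ≤ ip Q M) ∧
    -- otherwise, some admissible M keeping xxᵀ + M feasible gives ⟨Q, M⟩ < 0
    (¬ (∀ y : Fin n → ℝ, (∀ i, i ∉ B → y i = 0) → 0 ≤ y ⬝ᵥ (Q *ᵥ y)) →
      ∃ M : Matrix (Fin n) (Fin n) ℝ, M.PosSemidef ∧
        (∀ i j, i ∉ B ∨ j ∉ B → M i j = 0) ∧
        memFRS x (Matrix.vecMulVec x x + M) ∧ ip Q M < 0) := by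
  classical
  constructor
  · -- first part
    intro hpsd M hM hsupp
    obtain ⟨C, hC⟩ : ∃ C : Matrix (Fin n) (Fin n) ℝ, M = Cᴴ * C := by
      open scoped MatrixOrder in exact CStarAlgebra.nonneg_iff_eq_star_mul_self.mp hM.nonneg
    have hM' : ∀ i j, M i j = ∑ k, C k i * C k j := by
      intro i j
      rw [hC]
      simp [Matrix.mul_apply, Matrix.conjTranspose_apply]
    have hC0 : ∀ k i, i ∉ B → C k i = 0 := by
      intro k i hi
      have h0 : (0:ℝ) = ∑ k, C k i * C k i := by
        rw [← hM' i i, hsupp i i (Or.inl hi)]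
      have := (Finset.sum_eq_zero_iff_of_nonneg
        (fun k _ => mul_self_nonneg (C k i))).mp h0.symm k (Finset.mem_univ k)
      exact mul_self_eq_zero.mp this
    have h2 : ∀ k, (fun i => C k i) ⬝ᵥ (Q *ᵥ (fun i => C k i))
        = ∑ i, ∑ j, Q i j * (C k i * C k j) := by
      intro k
      simp only [dotProduct, mulVec]
      refine Finset.sum_congr rfl fun i _ => ?_
      rw [Finset.mul_sum]
      refine Finset.sum_congr rfl fun j _ => by ring
    have key : ip Q M = ∑ k, (fun i => C k i) ⬝ᵥ (Q *ᵥ (fun i => C k i)) := by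
      have h1 : ip Q M = ∑ i, ∑ j, ∑ k, Q i j * (C k i * C k j) := by
        unfold ip
        refine Finset.sum_congr rfl fun i _ => Finset.sum_congr rfl fun j _ => ?_
        rw [hM', Finset.mul_sum]
      rw [h1]
      calc ∑ i, ∑ j, ∑ k, Q i j * (C k i * C k j)
          = ∑ i, ∑ k, ∑ j, Q i j * (C k i * C k j) :=
            Finset.sum_congr rfl fun i _ => Finset.sum_comm
        _ = ∑ k, ∑ i, ∑ j, Q i j * (C k i * C k j) := Finset.sum_comm
        _ = ∑ k, (fun i => C k i) ⬝ᵥ (Q *ᵥ (fun i => C k i)) :=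
            Finset.sum_congr rfl fun k _ => (h2 k).symm
    rw [key]
    exact Finset.sum_nonneg fun k _ => hpsd _ (fun i hi => hC0 k i hi)
  · -- second part
    intro hneg
    push_neg at hneg
    obtain ⟨y, hy0, hyneg⟩ := hneg
    have hne : Nonempty (Fin n) := by
      by_contra h
      have : IsEmpty (Fin n) := not_nonempty_iff.mp h
      simp [dotProduct] at hyneg
    -- slack function
    set s : Fin n → Fin n → ℝ := fun i j =>
      min (x i * x j - max (x i + x j - 1) 0) (min (x i) (x j) - x i * x j) with hs
    have hs_nonneg : ∀ i j, 0 ≤ s i j := by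
      intro i j
      obtain ⟨h0i, h1i⟩ := hx i
      obtain ⟨h0j, h1j⟩ := hx j
      have h1 : max (x i + x j - 1) 0 ≤ x i * x j := by
        apply max_le _ (mul_nonneg h0i h0j)
        nlinarith
      have h2 : x i * x j ≤ min (x i) (x j) := by
        apply le_min <;> nlinarith
      simp only [hs]
      exact le_min (sub_nonneg.mpr h1) (sub_nonneg.mpr h2)
    have hs_pos : ∀ i j, i ∈ B → j ∈ B → 0 < s i j := by
      intro i j hi hj
      rw [hB] at hi hj
      obtain ⟨h0i, h1i⟩ := hi
      obtain ⟨h0j, h1j⟩ := hj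
      have h1 : max (x i + x j - 1) 0 < x i * x j := by
        apply max_lt _ (mul_pos h0i h0j)
        nlinarith
      have h2 : x i * x j < min (x i) (x j) := by
        apply lt_min <;> nlinarith
      simp only [hs]
      exact lt_min (sub_pos.mpr h1) (sub_pos.mpr h2)
    -- the scaling factor
    have hyB : ∀ i, y i ≠ 0 → i ∈ B := fun i hi => by
      by_contra h; exact hi (hy0 i h)
    set f : Fin n × Fin n → ℝ := fun p =>
      if y p.1 * y p.2 = 0 then 1 else s p.1 p.2 / |y p.1 * y p.2| with hf
    have huniv : (Finset.univ : Finset (Fin n × Fin n)).Nonempty :=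
      Finset.univ_nonempty
    set t : ℝ := Finset.univ.inf' huniv f with htdef
    have hf_pos : ∀ p : Fin n × Fin n, 0 < f p := by
      intro p
      simp only [hf]
      split_ifs with h
      · exact one_pos
      · have h1 : y p.1 ≠ 0 := fun h0 => h (by rw [h0]; ring)
        have h2 : y p.2 ≠ 0 := fun h0 => h (by rw [h0]; ring)
        exact div_pos (hs_pos _ _ (hyB _ h1) (hyB _ h2)) (abs_pos.mpr h)
    have ht_pos : 0 < t := by
      rw [htdef, Finset.lt_inf'_iff]
      exact fun p _ => hf_pos p
    have hbound : ∀ i j, t * |y i * y j| ≤ s i j := by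
      intro i j
      rcases eq_or_ne (y i * y j) 0 with h | h
      · rw [h, abs_zero, mul_zero]; exact hs_nonneg i j
      · have ht_le : t ≤ f (i, j) := Finset.inf'_le _ (Finset.mem_univ _)
        rw [hf] at ht_le
        simp only [if_neg h] at ht_le
        calc t * |y i * y j| ≤ (s i j / |y i * y j|) * |y i * y j| := by
              apply mul_le_mul_of_nonneg_right ht_le (abs_nonneg _)
          _ = s i j := div_mul_cancel₀ _ (abs_ne_zero.mpr h)
    have habs : ∀ i j, |t * (y i * y j)| ≤ s i j := by
      intro i j
      rw [abs_mul, abs_of_pos ht_pos]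
      exact hbound i j
    -- the matrix M
    refine ⟨t • Matrix.vecMulVec y y, aux_psd t ht_pos.le y, ?_, ?_, ?_⟩
    · intro i j hij
      have : y i * y j = 0 := by
        rcases hij with h | h
        · rw [hy0 i h]; ring
        · rw [hy0 j h]; ring
      simp [Matrix.smul_apply, Matrix.vecMulVec_apply, this]
    · refine ⟨?_, hx, ?_, ?_⟩
      · unfold Matrix.IsSymm
        ext i j
        simp only [Matrix.transpose_apply, Matrix.add_apply, Matrix.smul_apply,
          Matrix.vecMulVec_apply, smul_eq_mul]
        ring
      · intro i j
        have h1 := (abs_le.mp (habs i j)).1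
        have h2 := (abs_le.mp (habs i j)).2
        have hs1 : s i j ≤ x i * x j - max (x i + x j - 1) 0 := min_le_left _ _
        have hs2 : s i j ≤ min (x i) (x j) - x i * x j := min_le_right _ _
        have hE : (Matrix.vecMulVec x x + t • Matrix.vecMulVec y y) i j
            = x i * x j + t * (y i * y j) := by
          simp [Matrix.add_apply, Matrix.smul_apply, Matrix.vecMulVec_apply]
        rw [hE]
        constructor <;> linarith
      · have hsub : Matrix.vecMulVec x x + t • Matrix.vecMulVec y y
            - Matrix.vecMulVec x x = t • Matrix.vecMulVec y y := by abel
        rw [hsub]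
        exact aux_psd t ht_pos.le y
    · have hipeq : ip Q (t • Matrix.vecMulVec y y) = t * (y ⬝ᵥ (Q *ᵥ y)) := by
        unfold ip
        simp only [Matrix.smul_apply, Matrix.vecMulVec_apply, smul_eq_mul,
          dotProduct, mulVec]
        simp_rw [Finset.mul_sum]
        refine Finset.sum_congr rfl fun i _ => Finset.sum_congr rfl fun j _ => by ring
      rw [hipeq]
      exact mul_neg_of_pos_of_neg ht_pos hyneg
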